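/- Fix real z, z' with z ≠ 0 ≠ z' and a half-integer j. On the (2j+1)-dimensional space, define J_± as in the analytical basis with parameter z and define K₃ := J₃, K_± := √([1]_q/[1]_{q'}) · √(([j+1/2]_{q'}² − [J₃∓1/2]_{q'}²)/([j+1/2]_q² − [J₃∓1/2]_q²)) · J_± (a diagonal-operator factor times J_±, interpreted on basis vectors). Then K₃, K_± satisfy [K₃, K_±] = ±K_± and [K_+, K_-] = [2K₃]_{q'}, i.e. they realize the z'-deformed commutation relations on the same space. -/

import Mathlib

open Matrix

/-- Symmetric q-number `[x]_q := sinh(z x)/z`. -/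
noncomputable def qnum (z x : ℝ) : ℝ := Real.sinh (z * x) / z

/-- Weight `m = k - j` of the `k`-th basis vector, `j = N/2`. -/
noncomputable def wt (N : ℕ) (k : Fin (N + 1)) : ℝ := ((k : ℕ) : ℝ) - (N : ℝ) / 2

/-- `J₃ |j,m⟩ = m |j,m⟩`. -/
noncomputable def J3 (N : ℕ) : Matrix (Fin (N + 1)) (Fin (N + 1)) ℂ :=
  Matrix.diagonal fun k => (wt N k : ℂ)

/-- `J₊ |j,m⟩ = √([j+1/2]_q² − [m+1/2]_q²)/√([1]_q) |j,m+1⟩`. -/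
noncomputable def Jp (z : ℝ) (N : ℕ) : Matrix (Fin (N + 1)) (Fin (N + 1)) ℂ :=
  Matrix.of fun a b => if (a : ℕ) = (b : ℕ) + 1 then
    ((Real.sqrt (qnum z ((N : ℝ) / 2 + 1 / 2) ^ 2 - qnum z (wt N b + 1 / 2) ^ 2)
        / Real.sqrt (qnum z 1)) : ℂ) else 0

/-- `J₋ |j,m⟩ = √([j+1/2]_q² − [m−1/2]_q²)/√([1]_q) |j,m−1⟩`. -/
noncomputable def Jm (z : ℝ) (N : ℕ) : Matrix (Fin (N + 1)) (Fin (N + 1)) ℂ :=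
  Matrix.of fun a b => if (a : ℕ) + 1 = (b : ℕ) then
    ((Real.sqrt (qnum z ((N : ℝ) / 2 + 1 / 2) ^ 2 - qnum z (wt N b - 1 / 2) ^ 2)
        / Real.sqrt (qnum z 1)) : ℂ) else 0

/-- `[2K₃]_{q'}` acts on `|j,m⟩` as multiplication by `sinh(2z'm)/z'`. -/
noncomputable def twoK3q (z' : ℝ) (N : ℕ) : Matrix (Fin (N + 1)) (Fin (N + 1)) ℂ :=
  Matrix.diagonal fun k => (qnum z' (2 * wt N k) : ℂ)

/-- Diagonal change-of-basis factor
`√([1]_q/[1]_{q'}) √(([j+1/2]_{q'}² − [J₃∓1/2]_{q'}²)/([j+1/2]_q² − [J₃∓1/2]_q²))`,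
evaluated on the weight `m` shifted by `s/2`. -/
noncomputable def Dfac (z z' : ℝ) (N : ℕ) (s : ℝ) :
    Matrix (Fin (N + 1)) (Fin (N + 1)) ℂ :=
  Matrix.diagonal fun k =>
    ((Real.sqrt (qnum z 1 / qnum z' 1) *
      Real.sqrt ((qnum z' ((N : ℝ) / 2 + 1 / 2) ^ 2 - qnum z' (wt N k + s / 2) ^ 2)
        / (qnum z ((N : ℝ) / 2 + 1 / 2) ^ 2 - qnum z (wt N k + s / 2) ^ 2))) : ℂ)

lemma qnum_one_pos {w : ℝ} (hw : w ≠ 0) : 0 < qnum w 1 := by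
  unfold qnum
  rw [mul_one]
  rcases lt_or_gt_of_ne hw with h | h
  · have : Real.sinh w < 0 := by rw [← Real.sinh_zero]; exact Real.sinh_lt_sinh.2 h
    exact div_pos_of_neg_of_neg this h
  · have : 0 < Real.sinh w := by rw [← Real.sinh_zero]; exact Real.sinh_lt_sinh.2 h
    exact div_pos this h

lemma qnum_sq_lt {w : ℝ} (hw : w ≠ 0) {x y : ℝ} (h : |x| < |y|) :
    qnum w x ^ 2 < qnum w y ^ 2 := by
  unfold qnum
  rw [div_pow, div_pow]
  have hw2 : (0:ℝ) < w ^ 2 := by positivity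
  rw [div_lt_div_iff_of_pos_right hw2]
  have key : ∀ t : ℝ, Real.sinh t ^ 2 = Real.sinh |t| ^ 2 := fun t => by
    rw [← sq_abs (Real.sinh t), Real.abs_sinh]
  rw [key (w*x), key (w*y)]
  have h1 : |w*x| < |w*y| := by
    rw [abs_mul, abs_mul]
    exact mul_lt_mul_of_pos_left h (abs_pos.2 hw)
  have h2 : 0 ≤ Real.sinh |w*x| := by
    rw [← Real.sinh_zero]; exact Real.sinh_le_sinh.2 (abs_nonneg _)
  exact pow_lt_pow_left₀ (Real.sinh_lt_sinh.2 h1) h2 (by norm_num)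

lemma qnum_sq_neg (w x : ℝ) : qnum w (-x) ^ 2 = qnum w x ^ 2 := by
  unfold qnum; rw [mul_neg, Real.sinh_neg]; ring

lemma X_pos {w : ℝ} (hw : w ≠ 0) {N : ℕ} {t : ℝ} (ht : |t| < (N:ℝ)/2 + 1/2) :
    0 < qnum w ((N:ℝ)/2 + 1/2) ^ 2 - qnum w t ^ 2 := by
  have hy : |(N:ℝ)/2 + 1/2| = (N:ℝ)/2 + 1/2 := abs_of_pos (by positivity)
  have := qnum_sq_lt hw (y := (N:ℝ)/2 + 1/2) (x := t) (by rw [hy]; exact ht)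
  linarith

lemma wt_bound {N : ℕ} {b : Fin (N+1)} (hb : (b:ℕ) < N) :
    |wt N b + 1/2| < (N:ℝ)/2 + 1/2 := by
  unfold wt
  rw [abs_lt]
  have h1 : (0:ℝ) ≤ ((b:ℕ):ℝ) := Nat.cast_nonneg _
  have h2 : ((b:ℕ):ℝ) < (N:ℝ) := by exact_mod_cast hb
  constructor <;> linarith

lemma sqrt_combine {u u' X X' : ℝ} (hu : 0 < u) (hu' : 0 < u') (hX : 0 < X) (hX' : 0 < X') :
    Real.sqrt (u / u') * Real.sqrt (X' / X) * (Real.sqrt X / Real.sqrt u)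
      = Real.sqrt X' / Real.sqrt u' := by
  rw [Real.sqrt_div hu.le, Real.sqrt_div hX'.le]
  have h1 : Real.sqrt u ≠ 0 := by positivity
  have h2 : Real.sqrt u' ≠ 0 := by positivity
  have h3 : Real.sqrt X ≠ 0 := by positivity
  field_simp

lemma Kp_eq (z z' : ℝ) (hz : z ≠ 0) (hz' : z' ≠ 0) (N : ℕ) :
    Dfac z z' N (-1) * Jp z N = Jp z' N := by
  ext a b
  simp only [Dfac, Jp, Matrix.diagonal_mul, Matrix.of_apply]
  by_cases h : (a : ℕ) = (b : ℕ) + 1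
  · rw [if_pos h, if_pos h]
    have hb : (b:ℕ) < N := by omega
    have hwt : wt N a + (-1)/2 = wt N b + 1/2 := by
      unfold wt
      have : ((a:ℕ):ℝ) = ((b:ℕ):ℝ) + 1 := by exact_mod_cast h
      rw [this]; ring
    rw [hwt]
    exact_mod_cast sqrt_combine (qnum_one_pos hz) (qnum_one_pos hz')
      (X_pos hz (wt_bound hb)) (X_pos hz' (wt_bound hb))
  · rw [if_neg h, if_neg h, mul_zero]

lemma Km_eq (z z' : ℝ) (hz : z ≠ 0) (hz' : z' ≠ 0) (N : ℕ) :
    Dfac z z' N 1 * Jm z N = Jm z' N := by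
  ext a b
  simp only [Dfac, Jm, Matrix.diagonal_mul, Matrix.of_apply]
  by_cases h : (a : ℕ) + 1 = (b : ℕ)
  · rw [if_pos h, if_pos h]
    have ha : (a:ℕ) < N := by omega
    have hwt : wt N b - 1/2 = wt N a + 1/2 := by
      unfold wt
      have : ((b:ℕ):ℝ) = ((a:ℕ):ℝ) + 1 := by exact_mod_cast h.symm
      rw [this]; ring
    rw [hwt]
    exact_mod_cast sqrt_combine (qnum_one_pos hz) (qnum_one_pos hz')
      (X_pos hz (wt_bound ha)) (X_pos hz' (wt_bound ha))
  · rw [if_neg h, if_neg h, mul_zero]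

lemma J3_comm_Jp (w : ℝ) (N : ℕ) : J3 N * Jp w N - Jp w N * J3 N = Jp w N := by
  ext a b
  simp only [Matrix.sub_apply, J3, Jp, Matrix.diagonal_mul, Matrix.mul_diagonal,
    Matrix.of_apply]
  by_cases h : (a : ℕ) = (b : ℕ) + 1
  · rw [if_pos h]
    have hw : (wt N a : ℂ) = (wt N b : ℂ) + 1 := by
      unfold wt
      have : ((a:ℕ):ℝ) = ((b:ℕ):ℝ) + 1 := by exact_mod_cast h
      push_cast [this]; ring
    rw [hw]; ring
  · rw [if_neg h]; ring

lemma J3_comm_Jm (w : ℝ) (N : ℕ) : J3 N * Jm w N - Jm w N * J3 N = -(Jm w N) := by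
  ext a b
  simp only [Matrix.sub_apply, Matrix.neg_apply, J3, Jm, Matrix.diagonal_mul,
    Matrix.mul_diagonal, Matrix.of_apply]
  by_cases h : (a : ℕ) + 1 = (b : ℕ)
  · rw [if_pos h]
    have hw : (wt N b : ℂ) = (wt N a : ℂ) + 1 := by
      unfold wt
      have : ((b:ℕ):ℝ) = ((a:ℕ):ℝ) + 1 := by exact_mod_cast h.symm
      push_cast [this]; ring
    rw [hw]; ring
  · rw [if_neg h]; ring

lemma sqrt_prod {Y u : ℝ} (hY : 0 ≤ Y) (hu : 0 < u) :
    (Real.sqrt Y / Real.sqrt u) * (Real.sqrt Y / Real.sqrt u) = Y / u := by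
  rw [div_mul_div_comm, Real.mul_self_sqrt hY, Real.mul_self_sqrt hu.le]

lemma JpJm (w : ℝ) (hw : w ≠ 0) (N : ℕ) :
    Jp w N * Jm w N = Matrix.diagonal (fun k =>
      (((qnum w ((N:ℝ)/2 + 1/2) ^ 2 - qnum w (wt N k - 1/2) ^ 2) / qnum w 1 : ℝ) : ℂ)) := by
  ext a c
  rw [Matrix.mul_apply]
  simp only [Jp, Jm, Matrix.of_apply, Matrix.diagonal_apply]
  by_cases hac : a = c
  · subst hac
    rw [if_pos rfl]
    by_cases ha : (a : ℕ) = 0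
    · rw [Finset.sum_eq_zero (fun b _ => by
        rw [if_neg (by omega), zero_mul])]
      have hwa : wt N a - 1/2 = -((N:ℝ)/2 + 1/2) := by
        unfold wt
        have : ((a:ℕ):ℝ) = 0 := by exact_mod_cast ha
        rw [this]; ring
      rw [hwa, qnum_sq_neg]
      simp
    · have ha' : 0 < (a:ℕ) := Nat.pos_of_ne_zero ha
      have hlt : (a:ℕ) - 1 < N + 1 := by omega
      rw [Finset.sum_eq_single ⟨(a:ℕ) - 1, hlt⟩]
      · rw [if_pos (by simp; omega), if_pos (by simp; omega)]
        have hwt : wt N ⟨(a:ℕ) - 1, hlt⟩ + 1/2 = wt N a - 1/2 := by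
          unfold wt
          have : (((a:ℕ) - 1 : ℕ) : ℝ) = ((a:ℕ):ℝ) - 1 := by
            push_cast [Nat.cast_sub ha']; ring
          simp only [this]; ring
        rw [hwt]
        have hY : 0 < qnum w ((N:ℝ)/2 + 1/2) ^ 2 - qnum w (wt N a - 1/2) ^ 2 := by
          have hb : ((⟨(a:ℕ) - 1, hlt⟩ : Fin (N+1)) : ℕ) < N := by simp; omega
          have := X_pos hw (wt_bound hb) (w := w)
          rwa [hwt] at this
        exact_mod_cast sqrt_prod hY.le (qnum_one_pos hw)
      · intro b _ hb
        have : ¬((a:ℕ) = (b:ℕ) + 1) := by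
          intro hh
          exact hb (Fin.ext (by simp; omega))
        rw [if_neg this, zero_mul]
      · intro h; exact absurd (Finset.mem_univ _) h
  · rw [if_neg hac]
    refine Finset.sum_eq_zero fun b _ => ?_
    have : ¬((a:ℕ) = (b:ℕ) + 1) ∨ ¬((b:ℕ) + 1 = (c:ℕ)) := by
      by_contra hcon
      push_neg at hcon
      exact hac (Fin.ext (by omega))
    rcases this with h | h
    · rw [if_neg h, zero_mul]
    · rw [if_neg h, mul_zero]

lemma JmJp (w : ℝ) (hw : w ≠ 0) (N : ℕ) :
    Jm w N * Jp w N = Matrix.diagonal (fun k =>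
      (((qnum w ((N:ℝ)/2 + 1/2) ^ 2 - qnum w (wt N k + 1/2) ^ 2) / qnum w 1 : ℝ) : ℂ)) := by
  ext a c
  rw [Matrix.mul_apply]
  simp only [Jp, Jm, Matrix.of_apply, Matrix.diagonal_apply]
  by_cases hac : a = c
  · subst hac
    rw [if_pos rfl]
    by_cases ha : (a : ℕ) = N
    · rw [Finset.sum_eq_zero (fun b _ => by
        rw [if_neg (by omega), zero_mul])]
      have hwa : wt N a + 1/2 = (N:ℝ)/2 + 1/2 := by
        unfold wt
        have : ((a:ℕ):ℝ) = (N:ℝ) := by exact_mod_cast ha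
        rw [this]; ring
      rw [hwa]
      simp
    · have ha' : (a:ℕ) < N := by omega
      have hlt : (a:ℕ) + 1 < N + 1 := by omega
      rw [Finset.sum_eq_single ⟨(a:ℕ) + 1, hlt⟩]
      · rw [if_pos (by simp), if_pos (by simp)]
        have hwt : wt N ⟨(a:ℕ) + 1, hlt⟩ - 1/2 = wt N a + 1/2 := by
          unfold wt; push_cast; ring
        rw [hwt]
        have hY : 0 < qnum w ((N:ℝ)/2 + 1/2) ^ 2 - qnum w (wt N a + 1/2) ^ 2 :=
          X_pos hw (wt_bound ha')
        exact_mod_cast sqrt_prod hY.le (qnum_one_pos hw)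
      · intro b _ hb
        have : ¬((a:ℕ) + 1 = (b:ℕ)) := by
          intro hh
          exact hb (Fin.ext (by simp; omega))
        rw [if_neg this, zero_mul]
      · intro h; exact absurd (Finset.mem_univ _) h
  · rw [if_neg hac]
    refine Finset.sum_eq_zero fun b _ => ?_
    have : ¬((a:ℕ) + 1 = (b:ℕ)) ∨ ¬((b:ℕ) = (c:ℕ) + 1) := by
      by_contra hcon
      push_neg at hcon
      exact hac (Fin.ext (by omega))
    rcases this with h | h
    · rw [if_neg h, zero_mul]
    · rw [if_neg h, mul_zero]

lemma sinh_sq_sub (a b : ℝ) :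
    Real.sinh a ^ 2 - Real.sinh b ^ 2 = Real.sinh (a + b) * Real.sinh (a - b) := by
  rw [Real.sinh_add, Real.sinh_sub]
  nlinarith [Real.cosh_sq a, Real.cosh_sq b]

lemma qnum_diff {w : ℝ} (hw : w ≠ 0) (A m : ℝ) :
    (A - qnum w (m - 1/2) ^ 2) / qnum w 1 - (A - qnum w (m + 1/2) ^ 2) / qnum w 1
      = qnum w (2 * m) := by
  have hs : Real.sinh w ≠ 0 := by
    intro h
    rcases lt_or_gt_of_ne hw with h' | h'
    · have : Real.sinh w < 0 := by rw [← Real.sinh_zero]; exact Real.sinh_lt_sinh.2 h'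
      linarith
    · have : 0 < Real.sinh w := by rw [← Real.sinh_zero]; exact Real.sinh_lt_sinh.2 h'
      linarith
  have key : Real.sinh (w*(m+1/2)) ^ 2 - Real.sinh (w*(m-1/2)) ^ 2
      = Real.sinh (w*(2*m)) * Real.sinh w := by
    rw [sinh_sq_sub, show w*(m+1/2) + w*(m-1/2) = w*(2*m) by ring,
      show w*(m+1/2) - w*(m-1/2) = w by ring]
  unfold qnum
  rw [mul_one]
  set a := Real.sinh (w*(m+1/2)) with ha
  set b := Real.sinh (w*(m-1/2)) with hb2
  set c := Real.sinh (w*(2*m)) with hc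
  field_simp
  linear_combination key

lemma JpJm_sub (w : ℝ) (hw : w ≠ 0) (N : ℕ) :
    Jp w N * Jm w N - Jm w N * Jp w N = twoK3q w N := by
  rw [JpJm w hw N, JmJp w hw N, twoK3q, Matrix.diagonal_sub]
  refine congrArg Matrix.diagonal (funext fun k => ?_)
  rw [← Complex.ofReal_sub]
  exact_mod_cast qnum_diff hw _ (wt N k)

/-- With `K₃ := J₃`, `K₊ := f₊(J₃) J₊`, `K₋ := f₋(J₃) J₋` (the diagonal factors
of equation (mapKtoJ)), the operators `K₃, K_±` realize on the same space the
`z'`-deformed relations `[K₃, K_±] = ±K_±`, `[K₊, K₋] = [2K₃]_{q'}`. -/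
theorem quantum_basis_change_commutation (z z' : ℝ) (hz : z ≠ 0) (hz' : z' ≠ 0)
    (N : ℕ) :
    (J3 N * (Dfac z z' N (-1) * Jp z N) - (Dfac z z' N (-1) * Jp z N) * J3 N
        = Dfac z z' N (-1) * Jp z N) ∧
    (J3 N * (Dfac z z' N 1 * Jm z N) - (Dfac z z' N 1 * Jm z N) * J3 N
        = -(Dfac z z' N 1 * Jm z N)) ∧
    ((Dfac z z' N (-1) * Jp z N) * (Dfac z z' N 1 * Jm z N)
        - (Dfac z z' N 1 * Jm z N) * (Dfac z z' N (-1) * Jp z N)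
        = twoK3q z' N) := by
  refine ⟨?_, ?_, ?_⟩
  · rw [Kp_eq z z' hz hz' N]; exact J3_comm_Jp z' N
  · rw [Km_eq z z' hz hz' N]; exact J3_comm_Jm z' N
  · rw [Kp_eq z z' hz hz' N, Km_eq z z' hz hz' N]; exact JpJm_sub z' hz' N
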